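/- With n = α(N−1) and m = αN/2 for a positive integer α and N = |C| a power of 2 with N ≥ 2, the coefficient of x^{n−2}y² in (1/N)[(x+y)^n + (N−1)(x+y)^{n−m}(x−y)^m] equals α(α−1)(N−1)/2. In particular it is zero if and only if α = 1. -/

import Mathlib

open TrivSqZeroExt Polynomial

/-- The four element ring `R = ℤ₂ + u ℤ₂` with `u ^ 2 = 0`, realized as the
dual numbers over `ZMod 2`; the element `u` is `DualNumber.eps`. -/
abbrev Ru : Type := DualNumber (ZMod 2)

instance : Fintype Ru := inferInstanceAs (Fintype (ZMod 2 × ZMod 2))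
instance : DecidableEq Ru := inferInstanceAs (DecidableEq (ZMod 2 × ZMod 2))

/-- The ring homomorphism `η : R → ℤ₂`, `η (p + u q) = p`. -/
noncomputable def eta : Ru →+* ZMod 2 :=
  (TrivSqZeroExt.fstHom (ZMod 2) (ZMod 2) (ZMod 2)).toRingHom

/-- The `R`-module structure on `ℤ₂ʳ × Rˢ`:
`d • (a, b) = (η d * a, d * b)` componentwise. -/
noncomputable instance modM (r s : ℕ) :
    Module Ru ((Fin r → ZMod 2) × (Fin s → Ru)) :=
  letI m1 : Module Ru (ZMod 2) := Module.compHom (ZMod 2) eta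
  letI m2 : Module Ru (Fin r → ZMod 2) :=
    @Pi.module (Fin r) (fun _ => ZMod 2) Ru _ _ (fun _ => m1)
  letI m3 : Module Ru (Fin s → Ru) :=
    @Pi.module (Fin s) (fun _ => Ru) Ru _ _ (fun _ => Semiring.toModule)
  @Prod.instModule _ _ _ _ _ _ m2 m3

/-- Lee weight on `R`: `wt_L 0 = 0`, `wt_L 1 = 1`, `wt_L u = 2`, `wt_L (1+u) = 1`. -/
def leeWt (x : Ru) : ℕ :=
  if TrivSqZeroExt.fst x ≠ 0 then 1 else if TrivSqZeroExt.snd x ≠ 0 then 2 else 0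

/-- The weight: Hamming weight on the `ℤ₂`-part plus Lee weight on the `R`-part. -/
def wt {r s : ℕ} (v : (Fin r → ZMod 2) × (Fin s → Ru)) : ℕ :=
  hammingNorm v.1 + ∑ j, leeWt (v.2 j)

/-- The Gray map `Φ(x, p + u q) = (x, q, p + q)` (componentwise). -/
def gray {r s : ℕ} (v : (Fin r → ZMod 2) × (Fin s → Ru)) :
    Fin (r + 2*s) → ZMod 2 :=
  fun i =>
    Fin.append (Fin.append v.1 (fun j => TrivSqZeroExt.snd (v.2 j)))
      (fun j => TrivSqZeroExt.fst (v.2 j) + TrivSqZeroExt.snd (v.2 j))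
      (Fin.cast (by omega) i)

/-- The inner product `⟨v, w⟩ = u·Σ aᵢdᵢ + Σ bⱼeⱼ ∈ R`. -/
noncomputable def innerP {r s : ℕ} (v w : (Fin r → ZMod 2) × (Fin s → Ru)) : Ru :=
  DualNumber.eps * TrivSqZeroExt.inl (∑ i, v.1 i * w.1 i) + ∑ j, v.2 j * w.2 j

/-- The simultaneous cyclic shift of both blocks. -/
def shiftT {r s : ℕ} (v : (Fin r → ZMod 2) × (Fin s → Ru)) :
    (Fin r → ZMod 2) × (Fin s → Ru) :=
  (fun i => v.1 ⟨(i.val + (r - 1)) % r, Nat.mod_lt _ i.pos⟩,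
   fun j => v.2 ⟨(j.val + (s - 1)) % s, Nat.mod_lt _ j.pos⟩)

/-- The codeword of `ℤ₂ʳ × Rˢ` corresponding to `(l(x), g(x) + u·a(x))`. -/
noncomputable def genword (r s : ℕ) (l g a : Polynomial (ZMod 2)) :
    (Fin r → ZMod 2) × (Fin s → Ru) :=
  (fun i => l.coeff i,
   fun j => TrivSqZeroExt.inl (g.coeff j) + DualNumber.eps * TrivSqZeroExt.inl (a.coeff j))

/-- The cyclic code generated by `(l(x), g(x) + u·a(x))`: the `R`-span of all
simultaneous cyclic shifts of the corresponding codeword. -/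
noncomputable def cycCode (r s : ℕ) (l g a : Polynomial (ZMod 2)) :
    Submodule Ru ((Fin r → ZMod 2) × (Fin s → Ru)) :=
  Submodule.span Ru {v | ∃ k : ℕ, v = shiftT^[k] (genword r s l g a)}

/-- The `γ`-fold replication map `(v_r, v_s) ↦ (v_r, …, v_r, v_s, …, v_s)`. -/
def repMap (γ : ℕ) {r s : ℕ} (v : (Fin r → ZMod 2) × (Fin s → Ru)) :
    (Fin (γ * r) → ZMod 2) × (Fin (γ * s) → Ru) :=
  (fun i => v.1 ⟨i.val % r, Nat.mod_lt _ (by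
      rcases Nat.eq_zero_or_pos r with h | h
      · exact absurd i.isLt (by simp [h])
      · exact h)⟩,
   fun j => v.2 ⟨j.val % s, Nat.mod_lt _ (by
      rcases Nat.eq_zero_or_pos s with h | h
      · exact absurd j.isLt (by simp [h])
      · exact h)⟩)

/-- with `n = α(N−1)` and `m = αN/2`, the coefficient of `x^{n−2}y²`
in `(1/N)[(x+y)^n + (N−1)(x+y)^{n−m}(x−y)^m]`, namely
`(1/N)[C(n,2) + (N−1)(C(n−m,2) + C(m,2) − (n−m)m)]`, equals `α(α−1)(N−1)/2`;
in particular it is zero iff `α = 1`. -/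
theorem dual_coeff_two (α N : ℕ) (hα : 0 < α) (hN : ∃ k : ℕ, N = 2 ^ k)
    (hN2 : 2 ≤ N) :
    ((((α * (N - 1)).choose 2 : ℚ)
        + ((N : ℚ) - 1) * (((α * (N - 1) - α * N / 2).choose 2 : ℚ)
            + ((α * N / 2).choose 2 : ℚ)
            - ((α * (N - 1) - α * N / 2 : ℕ) : ℚ) * ((α * N / 2 : ℕ) : ℚ))) / (N : ℚ)
      = (α : ℚ) * ((α : ℚ) - 1) * ((N : ℚ) - 1) / 2) ∧
    (((((α * (N - 1)).choose 2 : ℚ)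
        + ((N : ℚ) - 1) * (((α * (N - 1) - α * N / 2).choose 2 : ℚ)
            + ((α * N / 2).choose 2 : ℚ)
            - ((α * (N - 1) - α * N / 2 : ℕ) : ℚ) * ((α * N / 2 : ℕ) : ℚ))) / (N : ℚ)
      = 0) ↔ α = 1) := by
  obtain ⟨t, ht, rfl⟩ : ∃ t, 1 ≤ t ∧ N = 2 * t := by
    obtain ⟨k, rfl⟩ := hN
    cases k with
    | zero => omega
    | succ k => exact ⟨2 ^ k, Nat.one_le_two_pow, by ring⟩
  have hle : α ≤ α * t := Nat.le_mul_of_pos_right α ht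
  have h1 : α * (2 * t) / 2 = α * t := by
    rw [show α * (2 * t) = α * t * 2 by ring]
    exact Nat.mul_div_cancel _ two_pos
  have hA : α * (2 * t - 1) = 2 * (α * t) - α := by
    rw [Nat.mul_sub, Nat.mul_one]; ring_nf
  have h2 : α * (2 * t - 1) - α * (2 * t) / 2 = α * t - α := by
    rw [h1, hA]
    set A := α * t with hA'
    omega
  have hle2 : α ≤ 2 * (α * t) := by omega
  have hmain : ((((α * (2 * t - 1)).choose 2 : ℚ)
        + ((2 * t : ℕ) - 1 : ℚ) * (((α * (2 * t - 1) - α * (2 * t) / 2).choose 2 : ℚ)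
            + ((α * (2 * t) / 2).choose 2 : ℚ)
            - ((α * (2 * t - 1) - α * (2 * t) / 2 : ℕ) : ℚ) * ((α * (2 * t) / 2 : ℕ) : ℚ))) / ((2 * t : ℕ) : ℚ)
      = (α : ℚ) * ((α : ℚ) - 1) * (((2 * t : ℕ) : ℚ) - 1) / 2) := by
    rw [h2, h1, hA, Nat.cast_choose_two, Nat.cast_choose_two, Nat.cast_choose_two,
      Nat.cast_sub hle2, Nat.cast_sub hle]
    have ht' : ((2 * t : ℕ) : ℚ) ≠ 0 := by
      exact_mod_cast (by omega : (2 * t : ℕ) ≠ 0)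
    push_cast
    field_simp
    ring
  refine ⟨hmain, ?_⟩
  rw [hmain]
  constructor
  · intro h
    have hα' : (0 : ℚ) < (α : ℚ) := by exact_mod_cast hα
    have hN' : (1 : ℚ) < ((2 * t : ℕ) : ℚ) := by exact_mod_cast (by omega : 1 < 2 * t)
    have hN'' : (1 : ℚ) < 2 * (t : ℚ) := by push_cast at hN'; linarith
    have hnum : (α : ℚ) * ((α : ℚ) - 1) * (2 * (t : ℚ) - 1) = 0 := by
      field_simp at h
      push_cast at h
      linear_combination h
    rcases mul_eq_zero.1 hnum with h' | h'
    · rcases mul_eq_zero.1 h' with h'' | h''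
      · exact absurd h'' (ne_of_gt hα')
      · have : (α : ℚ) = 1 := by linarith
        exact_mod_cast this
    · linarith
  · rintro rfl
    push_cast
    ring
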